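/- Let ρ₁(x) = arcsinh(b₁ cosh(x−a₁)) and ρ₂(x) = arcsinh(b₂ cosh(x−a₂)) with b₁, b₂ > 0 and (a₁,b₁) ≠ (a₂,b₂). Then the equation ρ₁(x) = ρ₂(x) has at most one real solution. -/
import Mathlib


/-- Two distinct distance-like functions `x ↦ arcsinh (b cosh (x - a))` (with `b > 0`)
agree at most once. -/
theorem distance_like_agree_at_most_once
    (a₁ a₂ b₁ b₂ : ℝ) (hb₁ : 0 < b₁) (hb₂ : 0 < b₂)
    (hne : (a₁, b₁) ≠ (a₂, b₂)) :
    {x : ℝ | Real.arsinh (b₁ * Real.cosh (x - a₁)) =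
             Real.arsinh (b₂ * Real.cosh (x - a₂))}.Subsingleton := by
  intro x hx y hy
  by_contra hxy
  simp only [Set.mem_setOf_eq] at hx hy
  have h1 : b₁ * Real.cosh (x - a₁) = b₂ * Real.cosh (x - a₂) :=
    Real.arsinh_injective hx
  have h2 : b₁ * Real.cosh (y - a₁) = b₂ * Real.cosh (y - a₂) :=
    Real.arsinh_injective hy
  rw [Real.cosh_sub, Real.cosh_sub] at h1 h2
  set A : ℝ := b₁ * Real.cosh a₁ - b₂ * Real.cosh a₂ with hA
  set B : ℝ := b₂ * Real.sinh a₂ - b₁ * Real.sinh a₁ with hB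
  have ex : A * Real.cosh x + B * Real.sinh x = 0 := by
    rw [hA, hB]; linear_combination h1
  have ey : A * Real.cosh y + B * Real.sinh y = 0 := by
    rw [hA, hB]; linear_combination h2
  have hs : Real.sinh (x - y) ≠ 0 := by
    intro h
    rw [Real.sinh_eq_zero, sub_eq_zero] at h
    exact hxy h
  have hBz : B = 0 := by
    have : B * Real.sinh (x - y) = 0 := by
      rw [Real.sinh_sub]
      linear_combination Real.cosh y * ex - Real.cosh x * ey
    exact (mul_eq_zero.mp this).resolve_right hs
  have hAz : A = 0 := by
    have : A * Real.sinh (x - y) = 0 := by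
      rw [Real.sinh_sub]
      linear_combination Real.sinh x * ey - Real.sinh y * ex
    exact (mul_eq_zero.mp this).resolve_right hs
  rw [hA, sub_eq_zero] at hAz
  rw [hB, sub_eq_zero] at hBz
  have hb : b₁ = b₂ := by
    have c1 := Real.cosh_sq_sub_sinh_sq a₁
    have c2 := Real.cosh_sq_sub_sinh_sq a₂
    have hsq : b₁ ^ 2 = b₂ ^ 2 := by
      linear_combination (b₁ * Real.cosh a₁ + b₂ * Real.cosh a₂) * hAz +
        (b₂ * Real.sinh a₂ + b₁ * Real.sinh a₁) * hBz - b₁ ^ 2 * c1 + b₂ ^ 2 * c2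
    exact le_antisymm (by nlinarith) (by nlinarith)
  have ha : a₁ = a₂ := by
    rw [hb] at hBz
    exact Real.sinh_injective (mul_left_cancel₀ (ne_of_gt hb₂) hBz).symm
  exact hne (by rw [ha, hb])
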